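/- Let ε ≥ 0, θ* ∈ ℝ^d with θ* ≠ 0, Δ ∈ ℝ^d, x ∈ ℝ^d and y ∈ ℝ with xᵀθ* − y > 0. Define l_ε(θ) := (xᵀθ−y)² + 2ε‖θ‖₂|xᵀθ−y| + ε²‖θ‖₂² and g := 2x(xᵀθ*−y) + 2ε[(θ*/‖θ*‖₂)(xᵀθ*−y) + ‖θ*‖₂·x] + 2ε²θ*. Then l_ε(θ*+Δ) − l_ε(θ*) ≤ Δᵀg + (Δᵀx)² + ε²‖Δ‖₂² + 4ε‖θ*+Δ‖₂·|Δᵀx| + 2ε(‖θ*+Δ‖₂ − ‖θ*‖₂)·(Δᵀx) + 2ε·[(‖θ*+Δ‖₂‖θ*‖₂ − (θ*+Δ)ᵀθ*)/‖θ*‖₂]·(xᵀθ*−y). -/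

import Mathlib

open MeasureTheory ProbabilityTheory Real Filter Matrix
open scoped RealInnerProductSpace BigOperators NNReal ENNReal Topology

noncomputable section

/-- The pointwise `L2`-adversarial squared loss of the linear model at a data point `(x,y)`:
`l_ε(θ) = (xᵀθ−y)² + 2ε‖θ‖₂|xᵀθ−y| + ε²‖θ‖₂² = (|xᵀθ−y| + ε‖θ‖₂)²`. -/
def ladv {d : ℕ} (ε : ℝ) (θ x : EuclideanSpace ℝ (Fin d)) (y : ℝ) : ℝ :=
  (⟪x, θ⟫ - y) ^ 2 + 2 * ε * ‖θ‖ * |⟪x, θ⟫ - y| + ε ^ 2 * ‖θ‖ ^ 2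

lemma key_real (ε a t s dn n1 n2 : ℝ) (hε : 0 ≤ ε) (ha : 0 < a) (hn1 : 0 < n1)
    (hn2 : 0 ≤ n2) (hsq : n2 ^ 2 = n1 ^ 2 + 2 * s + dn) :
    ((a + t) ^ 2 + 2 * ε * n2 * |a + t| + ε ^ 2 * n2 ^ 2)
      - (a ^ 2 + 2 * ε * n1 * a + ε ^ 2 * n1 ^ 2) ≤
    (2 * a * t + 2 * ε * (a / n1 * s + n1 * t) + 2 * ε ^ 2 * s)
      + t ^ 2 + ε ^ 2 * dn + 4 * ε * n2 * |t| + 2 * ε * (n2 - n1) * t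
      + 2 * ε * ((n2 * n1 - (n1 ^ 2 + s)) / n1) * a := by
  have h1 : |a + t| ≤ a + 2 * |t| + t := by
    nlinarith [abs_add_le a t, neg_abs_le t, abs_of_pos ha]
  have h2 : ε * (n2 * |a + t|) ≤ ε * (n2 * (a + 2 * |t| + t)) :=
    mul_le_mul_of_nonneg_left (mul_le_mul_of_nonneg_left h1 hn2) hε
  have hn1' : n1 ≠ 0 := hn1.ne'
  have hsq' : ε ^ 2 * n1 * n2 ^ 2 = ε ^ 2 * n1 * (n1 ^ 2 + 2 * s + dn) := by rw [hsq]
  field_simp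
  nlinarith [mul_le_mul_of_nonneg_left h2 hn1.le, hsq']

/-- Deterministic upper bound on the excess adversarial loss
`l_ε(θ*+Δ) − l_ε(θ*)` in terms of the gradient
`g = 2x(xᵀθ*−y) + 2ε[(θ*/‖θ*‖)(xᵀθ*−y) + ‖θ*‖x] + 2ε²θ*`, assuming `xᵀθ* − y > 0`. -/
theorem excess_adversarial_loss_upper_bound
    {d : ℕ} (ε : ℝ) (hε : 0 ≤ ε) (θs Δ x : EuclideanSpace ℝ (Fin d)) (y : ℝ)
    (hθs : θs ≠ 0) (hpos : 0 < ⟪x, θs⟫ - y) :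
    ladv ε (θs + Δ) x y - ladv ε θs x y ≤
      ⟪Δ, (2 * (⟪x, θs⟫ - y)) • x
            + (2 * ε) • (((⟪x, θs⟫ - y) / ‖θs‖) • θs + ‖θs‖ • x)
            + (2 * ε ^ 2) • θs⟫
        + ⟪Δ, x⟫ ^ 2 + ε ^ 2 * ‖Δ‖ ^ 2
        + 4 * ε * ‖θs + Δ‖ * |⟪Δ, x⟫|
        + 2 * ε * (‖θs + Δ‖ - ‖θs‖) * ⟪Δ, x⟫
        + 2 * ε * ((‖θs + Δ‖ * ‖θs‖ - ⟪θs + Δ, θs⟫) / ‖θs‖) * (⟪x, θs⟫ - y) := by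
  have hn1 : (0:ℝ) < ‖θs‖ := norm_pos_iff.mpr hθs
  have hsq : ‖θs + Δ‖ ^ 2 = ‖θs‖ ^ 2 + 2 * ⟪Δ, θs⟫ + ‖Δ‖ ^ 2 := by
    rw [norm_add_sq_real, real_inner_comm]
  have habs : |⟪x, θs⟫ - y| = ⟪x, θs⟫ - y := abs_of_pos hpos
  have hiadd : ⟪x, θs + Δ⟫ = (⟪x, θs⟫) + ⟪Δ, x⟫ := by
    rw [inner_add_right, real_inner_comm Δ x]
  have hith : ⟪θs + Δ, θs⟫ = ‖θs‖ ^ 2 + ⟪Δ, θs⟫ := by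
    rw [inner_add_left, real_inner_self_eq_norm_sq]
  have hg : ⟪Δ, (2 * (⟪x, θs⟫ - y)) • x
            + (2 * ε) • (((⟪x, θs⟫ - y) / ‖θs‖) • θs + ‖θs‖ • x)
            + (2 * ε ^ 2) • θs⟫
      = 2 * (⟪x, θs⟫ - y) * ⟪Δ, x⟫
        + 2 * ε * (((⟪x, θs⟫ - y) / ‖θs‖) * ⟪Δ, θs⟫ + ‖θs‖ * ⟪Δ, x⟫)
        + 2 * ε ^ 2 * ⟪Δ, θs⟫ := by
    simp only [inner_add_right, real_inner_smul_right]
  have := key_real ε (⟪x, θs⟫ - y) ⟪Δ, x⟫ ⟪Δ, θs⟫ (‖Δ‖ ^ 2) ‖θs‖ ‖θs + Δ‖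
    hε hpos hn1 (norm_nonneg _) hsq
  simp only [ladv, hiadd, habs, hg, hith]
  have heq : ⟪x, θs⟫ + ⟪Δ, x⟫ - y = (⟪x, θs⟫ - y) + ⟪Δ, x⟫ := by ring
  rw [heq]
  set a := ⟪x, θs⟫ - y
  set t := ⟪Δ, x⟫
  set s := ⟪Δ, θs⟫
  linarith [this]

end
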